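/- Conservativity over the minimal fragment: let Γ ∪ {A} be a set of PML formulas containing no classical and no intuitionistic variables. Then Γ ⊢_pml A if and only if Γ ⊢_(m) A, i.e., both absurdity rules can be completely dispensed with. -/
import Mathlib


namespace PML

/-- The three kinds of propositional variables: minimal, intuitionistic, classical. -/
inductive Kind : Type
  | m | i | c
deriving DecidableEq

/-- Formulas of propositional mixed logic (PML). -/
inductive Formula : Type
  | var : Kind → ℕ → Formula
  | bot : Formula
  | and : Formula → Formula → Formula
  | or : Formula → Formula → Formula
  | imp : Formula → Formula → Formula
deriving DecidableEq

namespace Formula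

/-- ¬A abbreviates A → ⊥. -/
def neg (A : Formula) : Formula := imp A bot

/-- All variables occurring in the formula have a kind satisfying `p`. -/
def onlyKinds (p : Kind → Prop) : Formula → Prop
  | var k _ => p k
  | bot => True
  | and A B => onlyKinds p A ∧ onlyKinds p B
  | or A B => onlyKinds p A ∧ onlyKinds p B
  | imp A B => onlyKinds p A ∧ onlyKinds p B

/-- A classical formula: only classical variables. -/
def IsClassical (A : Formula) : Prop := onlyKinds (fun k => k = Kind.c) A

/-- An intuitionistic formula: only intuitionistic and classical variables. -/
def IsIntuitionistic (A : Formula) : Prop := onlyKinds (fun k => k = Kind.i ∨ k = Kind.c) A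

/-- A formula without classical variables. -/
def NoClassicalVar (A : Formula) : Prop := onlyKinds (fun k => k ≠ Kind.c) A

/-- A formula without classical and without intuitionistic variables. -/
def OnlyMinimalVar (A : Formula) : Prop := onlyKinds (fun k => k = Kind.m) A

/-- A formula without intuitionistic variables. -/
def NoIntuitVar (A : Formula) : Prop := onlyKinds (fun k => k ≠ Kind.i) A

/-- Substitution of the formula `F` for every occurrence of the variable of kind `k`, index `n`. -/
def subst (F : Formula) (k : Kind) (n : ℕ) : Formula → Formula
  | var k' n' => if k' = k ∧ n' = n then F else var k' n'
  | bot => bot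
  | and A B => and (subst F k n A) (subst F k n B)
  | or A B => or (subst F k n A) (subst F k n B)
  | imp A B => imp (subst F k n A) (subst F k n B)

end Formula

/-- Which optional rules are available: the intuitionistic absurdity rule (⊥_i),
the classical absurdity rule (⊥_c), and whether (∨_E) is unrestricted
(`fullOrE = false` gives the PML^∨ restriction). -/
structure Rules where
  botI : Bool
  botC : Bool
  fullOrE : Bool

/-- Natural deduction for mixed logic, parametrized by the available rules. -/
inductive Deriv (R : Rules) : Set Formula → Formula → Prop
  | ax (A : Formula) : Deriv R {A} A
  | weak {Γ : Set Formula} {A : Formula} (B : Formula) : Deriv R Γ A → Deriv R (insert B Γ) A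
  | andI {Γ₁ Γ₂ : Set Formula} {A₁ A₂ : Formula} :
      Deriv R Γ₁ A₁ → Deriv R Γ₂ A₂ → Deriv R (Γ₁ ∪ Γ₂) (A₁.and A₂)
  | andE₁ {Γ : Set Formula} {A₁ A₂ : Formula} : Deriv R Γ (A₁.and A₂) → Deriv R Γ A₁
  | andE₂ {Γ : Set Formula} {A₁ A₂ : Formula} : Deriv R Γ (A₁.and A₂) → Deriv R Γ A₂
  | orI₁ {Γ : Set Formula} {A₁ : Formula} (A₂ : Formula) : Deriv R Γ A₁ → Deriv R Γ (A₁.or A₂)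
  | orI₂ {Γ : Set Formula} {A₂ : Formula} (A₁ : Formula) : Deriv R Γ A₂ → Deriv R Γ (A₁.or A₂)
  | orE {Γ₁ Γ₂ Γ₃ : Set Formula} {A₁ A₂ B : Formula} :
      (R.fullOrE = true ∨ ((A₁.or A₂).IsClassical → B.IsClassical)) →
      Deriv R Γ₁ (A₁.or A₂) → Deriv R (insert A₁ Γ₂) B → Deriv R (insert A₂ Γ₃) B →
      Deriv R (Γ₁ ∪ Γ₂ ∪ Γ₃) B
  | impI {Γ : Set Formula} {A₁ A₂ : Formula} : Deriv R (insert A₁ Γ) A₂ → Deriv R Γ (A₁.imp A₂)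
  | impE {Γ₁ Γ₂ : Set Formula} {A₁ A₂ : Formula} :
      Deriv R Γ₁ (A₁.imp A₂) → Deriv R Γ₂ A₁ → Deriv R (Γ₁ ∪ Γ₂) A₂
  | botI {Γ : Set Formula} {A : Formula} :
      R.botI = true → A.IsIntuitionistic → Deriv R Γ Formula.bot → Deriv R Γ A
  | botC {Γ : Set Formula} {A : Formula} :
      R.botC = true → A.IsClassical → Deriv R Γ (A.neg.neg) → Deriv R Γ A

/-- Γ ⊢_pml A : full mixed logic. -/
def DerivPML : Set Formula → Formula → Prop := Deriv ⟨true, true, true⟩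

/-- Γ ⊢_(i) A : derivable without the rule (⊥_c). -/
def DerivI : Set Formula → Formula → Prop := Deriv ⟨true, false, true⟩

/-- Γ ⊢_(m) A : derivable without the rules (⊥_i) and (⊥_c). -/
def DerivM : Set Formula → Formula → Prop := Deriv ⟨false, false, true⟩

/-- Γ ⊢_(i') A : derivable without the rule (⊥_i). -/
def DerivI' : Set Formula → Formula → Prop := Deriv ⟨false, true, true⟩

/-- Γ ⊢^∨ A : derivable in PML^∨ (restricted ∨-elimination). -/
def DerivVee : Set Formula → Formula → Prop := Deriv ⟨true, true, false⟩

/-- A Kripke frame over a poset `W`: a monotone forcing relation on atoms. -/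
structure KripkeFrame (W : Type) [PartialOrder W] where
  fvar : W → Kind → ℕ → Prop
  fbot : W → Prop
  mono_var : ∀ {a b : W} (k : Kind) (n : ℕ), a ≤ b → fvar a k n → fvar b k n
  mono_bot : ∀ {a b : W}, a ≤ b → fbot a → fbot b

variable {W : Type} [PartialOrder W]

/-- Forcing, extended to compound formulas. -/
def KripkeFrame.force (M : KripkeFrame W) : W → Formula → Prop
  | a, .var k n => M.fvar a k n
  | a, .bot => M.fbot a
  | a, .and A B => M.force a A ∧ M.force a B
  | a, .or A B => M.force a A ∨ M.force a B
  | a, .imp A B => ∀ b : W, a ≤ b → M.force b A → M.force b B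

/-- A formula is valid in a model iff it is forced at every node. -/
def KripkeFrame.Valid (M : KripkeFrame W) (A : Formula) : Prop := ∀ a : W, M.force a A

/-- A mixed Kripke model: (2) a node forcing ⊥ forces every intuitionistic or classical
variable; (3) a classical variable forced at a node not forcing ⊥ is forced everywhere. -/
def IsMixed (M : KripkeFrame W) : Prop :=
  (∀ (a : W) (k : Kind) (n : ℕ), M.fbot a → (k = Kind.i ∨ k = Kind.c) → M.fvar a k n) ∧
  (∀ (a : W) (n : ℕ), M.fvar a Kind.c n → ¬ M.fbot a → ∀ b : W, M.fvar b Kind.c n)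

/-- An intuitionistic mixed Kripke model: restricted to atoms in 𝒱_m ∪ 𝒱_i ∪ {⊥}
(no classical atom is forced) and a node forcing ⊥ forces every intuitionistic variable. -/
def IsIntMixed (M : KripkeFrame W) : Prop :=
  (∀ (a : W) (n : ℕ), ¬ M.fvar a Kind.c n) ∧
  (∀ (a : W) (n : ℕ), M.fbot a → M.fvar a Kind.i n)

/-- A minimal mixed Kripke model: restricted to atoms in 𝒱_m ∪ {⊥}. -/
def IsMinMixed (M : KripkeFrame W) : Prop :=
  (∀ (a : W) (n : ℕ), ¬ M.fvar a Kind.i n) ∧ (∀ (a : W) (n : ℕ), ¬ M.fvar a Kind.c n)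

/-- Semantic entailment: every mixed Kripke model validating all of Γ validates A. -/
def Entails (Γ : Set Formula) (A : Formula) : Prop :=
  ∀ (W : Type) [PartialOrder W] [Nonempty W] (M : KripkeFrame W),
    IsMixed M → (∀ B ∈ Γ, M.Valid B) → M.Valid A

/-- A saturated set of formulas. -/
def Saturated (Δ : Set Formula) : Prop :=
  ∀ C D : Formula, DerivPML Δ (C.or D) → C ∈ Δ ∨ D ∈ Δ

/-- The restriction 𝒦_(i) of a model to atoms in 𝒱_m ∪ 𝒱_i ∪ {⊥}. -/
def KripkeFrame.restrictI (M : KripkeFrame W) : KripkeFrame W where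
  fvar a k n := k ≠ Kind.c ∧ M.fvar a k n
  fbot := M.fbot
  mono_var := by
    intro a b k n hab h
    exact ⟨h.1, M.mono_var k n hab h.2⟩
  mono_bot := fun hab h => M.mono_bot hab h

/-- The restriction 𝒦_(m) of a model to atoms in 𝒱_m ∪ {⊥}. -/
def KripkeFrame.restrictM (M : KripkeFrame W) : KripkeFrame W where
  fvar a k n := k = Kind.m ∧ M.fvar a k n
  fbot := M.fbot
  mono_var := by
    intro a b k n hab h
    exact ⟨h.1, M.mono_var k n hab h.2⟩
  mono_bot := fun hab h => M.mono_bot hab h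

/-- The translation ^m : intuitionistic variables X_i are sent to ¬¬ m(X_i). -/
def Formula.transM (m : ℕ → ℕ) : Formula → Formula
  | .var Kind.i n => ((Formula.var Kind.m (m n)).neg).neg
  | .var k n => .var k n
  | .bot => .bot
  | .and A B => .and (Formula.transM m A) (Formula.transM m B)
  | .or A B => .or (Formula.transM m A) (Formula.transM m B)
  | .imp A B => .imp (Formula.transM m A) (Formula.transM m B)

/-- The translation ^i : classical variables X_c are sent to ¬¬ i(X_c), and
disjunctions are doubly negated. -/
def Formula.transI (f : ℕ → ℕ) : Formula → Formula
  | .var Kind.c n => ((Formula.var Kind.i (f n)).neg).neg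
  | .var k n => .var k n
  | .bot => .bot
  | .and A B => .and (Formula.transI f A) (Formula.transI f B)
  | .or A B => (((Formula.transI f A).or (Formula.transI f B)).neg).neg
  | .imp A B => .imp (Formula.transI f A) (Formula.transI f B)

namespace Conserv

open Formula

/-- Cast a derivation along an equality of contexts. -/
theorem castCtx {R : Rules} {Γ Γ' : Set Formula} {A : Formula}
    (h : Deriv R Γ A) (e : Γ = Γ') : Deriv R Γ' A := e ▸ h

/-- Cut with a single hypothesis. -/
theorem cut1 {R : Rules} {X Y : Formula} {Δ : Set Formula}
    (h1 : Deriv R {X} Y) (h2 : Deriv R Δ X) : Deriv R Δ Y := by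
  have h1' : Deriv R (insert X (∅ : Set Formula)) Y :=
    castCtx h1 (by simp)
  have := Deriv.impE (Deriv.impI h1') h2
  exact castCtx this (Set.empty_union Δ)

/-- Formulas containing no variables at all. -/
def BotOnly (A : Formula) : Prop := Formula.onlyKinds (fun _ => False) A

/-- Every bot-only formula is derivable from ⊥ in minimal logic. -/
theorem fromBot {R : Rules} : ∀ {A : Formula}, BotOnly A → Deriv R {Formula.bot} A := by
  intro A hA
  induction A with
  | var k n => exact absurd hA id
  | bot => exact Deriv.ax _
  | and A B ihA ihB =>
    exact castCtx (Deriv.andI (ihA hA.1) (ihB hA.2)) (Set.union_self _)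
  | or A B ihA ihB => exact Deriv.orI₁ B (ihA hA.1)
  | imp A B ihA ihB =>
    exact Deriv.impI ((Deriv.weak A (ihB hA.2)))

/-- Bot-only formulas are decided by minimal logic. -/
theorem botDecide {R : Rules} (hfull : R.fullOrE = true) :
    ∀ {A : Formula}, BotOnly A →
      Deriv R (∅ : Set Formula) A ∨ Deriv R {A} Formula.bot := by
  intro A hA
  induction A with
  | var k n => exact absurd hA id
  | bot => exact Or.inr (Deriv.ax _)
  | and A B ihA ihB =>
    rcases ihA hA.1 with h1 | h1
    · rcases ihB hA.2 with h2 | h2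
      · exact Or.inl (castCtx (Deriv.andI h1 h2) (Set.union_self _))
      · exact Or.inr (cut1 h2 (Deriv.andE₂ (Deriv.ax (A.and B))))
    · exact Or.inr (cut1 h1 (Deriv.andE₁ (Deriv.ax (A.and B))))
  | or A B ihA ihB =>
    rcases ihA hA.1 with h1 | h1
    · exact Or.inl (Deriv.orI₁ B h1)
    rcases ihB hA.2 with h2 | h2
    · exact Or.inl (Deriv.orI₂ A h2)
    · refine Or.inr ?_
      have h1' : Deriv R (insert A (∅ : Set Formula)) Formula.bot :=
        castCtx h1 (by simp)
      have h2' : Deriv R (insert B (∅ : Set Formula)) Formula.bot :=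
        castCtx h2 (by simp)
      have := Deriv.orE (Or.inl hfull) (Deriv.ax (A.or B)) h1' h2'
      exact castCtx this (by simp)
  | imp A B ihA ihB =>
    rcases ihB hA.2 with h2 | h2
    · exact Or.inl (Deriv.impI (castCtx (Deriv.weak A h2) (by simp)))
    rcases ihA hA.1 with h1 | h1
    · refine Or.inr ?_
      have hB : Deriv R {A.imp B} B :=
        castCtx ((Deriv.ax (A.imp B)).impE h1) (by simp)
      exact cut1 h2 hB
    · refine Or.inl (Deriv.impI ?_)
      have h1' : Deriv R (insert A (∅ : Set Formula)) Formula.bot :=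
        castCtx h1 (by simp)
      exact cut1 (fromBot hA.2) h1'

/-- From Γ ⊢ ⊥, derive any bot-only formula. -/
theorem botElim {R : Rules} {Γ : Set Formula} {A : Formula}
    (hA : BotOnly A) (h : Deriv R Γ Formula.bot) : Deriv R Γ A :=
  cut1 (fromBot hA) h

/-- Double-negation elimination for bot-only formulas in minimal logic. -/
theorem dneBotOnly {R : Rules} (hfull : R.fullOrE = true) {Γ : Set Formula} {A : Formula}
    (hA : BotOnly A) (h : Deriv R Γ A.neg.neg) : Deriv R Γ A := by
  rcases botDecide hfull hA with h1 | h1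
  · -- ∅ ⊢ A; then {¬¬A} ⊢ A by weakening, cut with h.
    exact cut1 (castCtx (Deriv.weak A.neg.neg h1) (by simp)) h
  · -- {A} ⊢ ⊥, so ∅ ⊢ ¬A, so {¬¬A} ⊢ ⊥, so {¬¬A} ⊢ A.
    have hnA : Deriv R (∅ : Set Formula) A.neg :=
      Deriv.impI (castCtx h1 (by simp))
    have hbot : Deriv R {A.neg.neg} Formula.bot :=
      castCtx ((Deriv.ax A.neg.neg).impE hnA) (by simp)
    exact cut1 (botElim hA hbot) h

/-- The substitution killing all non-minimal variables. -/
def sig : Formula → Formula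
  | .var Kind.m n => .var Kind.m n
  | .var Kind.i _ => .bot
  | .var Kind.c _ => .bot
  | .bot => .bot
  | .and A B => .and (sig A) (sig B)
  | .or A B => .or (sig A) (sig B)
  | .imp A B => .imp (sig A) (sig B)

theorem sig_botOnly {A : Formula} (hA : A.IsIntuitionistic) : BotOnly (sig A) := by
  induction A with
  | var k n =>
    rcases hA with h | h <;> subst h <;> trivial
  | bot => trivial
  | and A B ihA ihB => exact ⟨ihA hA.1, ihB hA.2⟩
  | or A B ihA ihB => exact ⟨ihA hA.1, ihB hA.2⟩
  | imp A B ihA ihB => exact ⟨ihA hA.1, ihB hA.2⟩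

theorem sig_botOnly_c {A : Formula} (hA : A.IsClassical) : BotOnly (sig A) := by
  apply sig_botOnly
  induction A with
  | var k n => exact Or.inr hA
  | bot => trivial
  | and A B ihA ihB => exact ⟨ihA hA.1, ihB hA.2⟩
  | or A B ihA ihB => exact ⟨ihA hA.1, ihB hA.2⟩
  | imp A B ihA ihB => exact ⟨ihA hA.1, ihB hA.2⟩

theorem sig_id {A : Formula} (hA : A.OnlyMinimalVar) : sig A = A := by
  induction A with
  | var k n => subst hA; rfl
  | bot => rfl
  | and A B ihA ihB => simp [sig, ihA hA.1, ihB hA.2]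
  | or A B ihA ihB => simp [sig, ihA hA.1, ihB hA.2]
  | imp A B ihA ihB => simp [sig, ihA hA.1, ihB hA.2]

/-- Main lemma: a PML derivation yields a minimal derivation of the σ-image. -/
theorem main {Γ : Set Formula} {A : Formula} (h : DerivPML Γ A) :
    DerivM (sig '' Γ) (sig A) := by
  induction h with
  | ax A => exact castCtx (Deriv.ax (sig A)) (Set.image_singleton).symm
  | weak B _ ih => exact castCtx (Deriv.weak (sig B) ih) (Set.image_insert_eq).symm
  | andI _ _ ih1 ih2 => exact castCtx (Deriv.andI ih1 ih2) (Set.image_union _ _ _).symm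
  | andE₁ _ ih => exact Deriv.andE₁ ih
  | andE₂ _ ih => exact Deriv.andE₂ ih
  | orI₁ A₂ _ ih => exact Deriv.orI₁ (sig A₂) ih
  | orI₂ A₁ _ ih => exact Deriv.orI₂ (sig A₁) ih
  | orE hside _ _ _ ih1 ih2 ih3 =>
    have := Deriv.orE (R := ⟨false, false, true⟩) (Or.inl rfl) ih1
      (castCtx ih2 Set.image_insert_eq) (castCtx ih3 Set.image_insert_eq)
    exact castCtx this (by rw [Set.image_union, Set.image_union])
  | impI _ ih => exact Deriv.impI (castCtx ih Set.image_insert_eq)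
  | impE _ _ ih1 ih2 => exact castCtx (Deriv.impE ih1 ih2) (Set.image_union _ _ _).symm
  | botI _ hInt _ ih => exact botElim (sig_botOnly hInt) ih
  | botC _ hCl _ ih => exact dneBotOnly rfl (sig_botOnly_c hCl) ih

/-- The easy direction: minimal derivations are PML derivations. -/
theorem ofMin {Γ : Set Formula} {A : Formula} (h : DerivM Γ A) : DerivPML Γ A := by
  induction h with
  | ax A => exact Deriv.ax A
  | weak B _ ih => exact Deriv.weak B ih
  | andI _ _ ih1 ih2 => exact Deriv.andI ih1 ih2
  | andE₁ _ ih => exact Deriv.andE₁ ih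
  | andE₂ _ ih => exact Deriv.andE₂ ih
  | orI₁ A₂ _ ih => exact Deriv.orI₁ A₂ ih
  | orI₂ A₁ _ ih => exact Deriv.orI₂ A₁ ih
  | orE hside _ _ _ ih1 ih2 ih3 => exact Deriv.orE (Or.inl rfl) ih1 ih2 ih3
  | impI _ ih => exact Deriv.impI ih
  | impE _ _ ih1 ih2 => exact Deriv.impE ih1 ih2
  | botI hb _ _ _ => exact absurd hb (by simp)
  | botC hb _ _ _ => exact absurd hb (by simp)

end Conserv

end PML
/-- Conservativity over the minimal fragment: for Γ ∪ {A} without classical and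
intuitionistic variables, Γ ⊢_pml A iff Γ ⊢_(m) A. -/
theorem PML.conservativity_minimal (Γ : Set PML.Formula) (A : PML.Formula)
    (hΓ : ∀ B ∈ Γ, B.OnlyMinimalVar) (hA : A.OnlyMinimalVar) :
    PML.DerivPML Γ A ↔ PML.DerivM Γ A := by
  constructor
  · intro h
    have hmain := PML.Conserv.main h
    rw [PML.Conserv.sig_id hA] at hmain
    have himg : PML.Conserv.sig '' Γ = Γ := by
      apply Set.eq_of_subset_of_subset
      · rintro x ⟨y, hy, rfl⟩
        rw [PML.Conserv.sig_id (hΓ y hy)]; exact hy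
      · intro x hx
        exact ⟨x, hx, PML.Conserv.sig_id (hΓ x hx)⟩
    rwa [himg] at hmain
  · exact PML.Conserv.ofMin
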